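/- Let g = so(3) × ℝ be the product of the Lie algebra of real skew-symmetric 3×3 matrices with the one-dimensional abelian Lie algebra ℝ, and let μ be the skew-symmetric bilinear bracket on ℝ⁴ = (Fin 4 → ℝ) (standard basis e₁,…,e₄) determined by μ(e₂,e₃) = e₁, μ(e₂,e₄) = −e₃, μ(e₃,e₄) = e₂ and all other basis brackets zero (the Lie algebra A_{4,10}). Then A_{4,10} is a contraction of so(3) ⊕ ℝ: there exists a family φ : ℝ → ((Fin 4 → ℝ) ≃ₗ[ℝ] g) of linear equivalences such that for all x, y ∈ Fin 4 → ℝ, (φ t).symm ⁅φ t x, φ t y⁆ converges to μ(x, y) as t → +∞. -/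

import Mathlib

section ProdLie

variable (L M : Type*) [LieRing L] [LieRing M]

/-- The product of two Lie rings, with componentwise bracket. -/
instance Prod.instLieRing : LieRing (L × M) where
  bracket p q := (⁅p.1, q.1⁆, ⁅p.2, q.2⁆)
  add_lie x y z := by
    show (⁅(x+y).1, z.1⁆, ⁅(x+y).2, z.2⁆) = (⁅x.1,z.1⁆, ⁅x.2,z.2⁆) + (⁅y.1,z.1⁆, ⁅y.2,z.2⁆)
    simp only [Prod.fst_add, Prod.snd_add, Prod.mk_add_mk, Prod.mk.injEq]
    exact ⟨add_lie .., add_lie ..⟩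
  lie_add x y z := by
    show (⁅x.1, (y+z).1⁆, ⁅x.2, (y+z).2⁆) = (⁅x.1,y.1⁆, ⁅x.2,y.2⁆) + (⁅x.1,z.1⁆, ⁅x.2,z.2⁆)
    simp only [Prod.fst_add, Prod.snd_add, Prod.mk_add_mk, Prod.mk.injEq]
    exact ⟨lie_add .., lie_add ..⟩
  lie_self x := by
    show (⁅x.1, x.1⁆, ⁅x.2, x.2⁆) = (0 : L × M)
    simp
  leibniz_lie x y z := by
    show (⁅x.1, ⁅y.1,z.1⁆⁆, ⁅x.2, ⁅y.2,z.2⁆⁆)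
      = (⁅⁅x.1,y.1⁆, z.1⁆, ⁅⁅x.2,y.2⁆, z.2⁆) + (⁅y.1, ⁅x.1,z.1⁆⁆, ⁅y.2, ⁅x.2,z.2⁆⁆)
    simp only [Prod.mk_add_mk, Prod.mk.injEq]
    exact ⟨leibniz_lie .., leibniz_lie ..⟩

variable (R : Type*) [CommRing R] [LieAlgebra R L] [LieAlgebra R M]

/-- The product of two Lie algebras, with componentwise bracket. -/
instance Prod.instLieAlgebra : LieAlgebra R (L × M) where
  lie_smul t x y := by
    show (⁅x.1, (t • y).1⁆, ⁅x.2, (t • y).2⁆) = t • (⁅x.1,y.1⁆, ⁅x.2,y.2⁆)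
    simp

@[simp] theorem Prod.bracket_def (p q : L × M) : ⁅p, q⁆ = (⁅p.1, q.1⁆, ⁅p.2, q.2⁆) := rfl

end ProdLie

attribute [local instance 100] LieRing.ofAssociativeRing

open Matrix in
/-- The Lie algebra `so(3)` of real skew-symmetric `3 × 3` matrices, as a Lie subalgebra of the
matrix Lie algebra with the commutator bracket. -/
def so3 : LieSubalgebra ℝ (Matrix (Fin 3) (Fin 3) ℝ) where
  carrier := {A | Aᵀ = -A}
  add_mem' := by
    intro A B hA hB
    simp only [Set.mem_setOf_eq] at *
    rw [Matrix.transpose_add, hA, hB, neg_add]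
  zero_mem' := by simp
  smul_mem' := by
    intro c A hA
    simp only [Set.mem_setOf_eq] at *
    rw [Matrix.transpose_smul, hA, smul_neg]
  lie_mem' := by
    intro A B hA hB
    simp only [Set.mem_setOf_eq] at *
    rw [Ring.lie_def, Matrix.transpose_sub, Matrix.transpose_mul, Matrix.transpose_mul, hA, hB,
      neg_mul_neg, neg_mul_neg, neg_sub]


section Contr

open Matrix

/-- Skew matrix with parameters. -/
def cmat (u1 u2 u3 : ℝ) : Matrix (Fin 3) (Fin 3) ℝ :=
  !![0, -u3, u2; u3, 0, -u1; -u2, u1, 0]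

lemma cmat_mem (u1 u2 u3 : ℝ) : cmat u1 u2 u3 ∈ so3 := by
  show (cmat u1 u2 u3)ᵀ = -(cmat u1 u2 u3)
  ext i j
  fin_cases i <;> fin_cases j <;> simp [cmat]

/-- The contraction family of linear equivalences. -/
noncomputable def contrEquiv (c : ℝ) (hc : c ≠ 0) : (Fin 4 → ℝ) ≃ₗ[ℝ] (so3 × ℝ) where
  toFun x := (⟨cmat (c * x 1) (c * x 2) (c ^ 2 * x 0 + x 3), cmat_mem _ _ _⟩, x 3)
  invFun p := ![c⁻¹ * c⁻¹ * ((p.1 : Matrix (Fin 3) (Fin 3) ℝ) 1 0 - p.2),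
    c⁻¹ * (p.1 : Matrix (Fin 3) (Fin 3) ℝ) 2 1,
    c⁻¹ * (p.1 : Matrix (Fin 3) (Fin 3) ℝ) 0 2, p.2]
  map_add' x y := by
    refine Prod.ext (Subtype.ext ?_) rfl
    show cmat _ _ _ = cmat _ _ _ + cmat _ _ _
    ext i j
    fin_cases i <;> fin_cases j <;> simp [cmat] <;> ring
  map_smul' r x := by
    refine Prod.ext (Subtype.ext ?_) rfl
    show cmat _ _ _ = r • cmat _ _ _
    ext i j
    fin_cases i <;> fin_cases j <;> simp [cmat] <;> ring
  left_inv x := by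
    funext i
    fin_cases i <;> simp [cmat] <;> field_simp <;> ring
  right_inv p := by
    obtain ⟨⟨A, hA⟩, z⟩ := p
    have hA' : Aᵀ = -A := hA
    have key : ∀ i j : Fin 3, A j i = -A i j := by
      intro i j
      have := congrFun (congrFun hA' i) j
      simpa [Matrix.transpose_apply] using this
    refine Prod.ext (Subtype.ext ?_) rfl
    show cmat _ _ _ = A
    have h00 : A 0 0 = 0 := by have := key 0 0; linarith
    have h11 : A 1 1 = 0 := by have := key 1 1; linarith
    have h22 : A 2 2 = 0 := by have := key 2 2; linarith
    ext i j
    fin_cases i <;> fin_cases j <;>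
      simp [cmat, h00, h11, h22, key 0 1, key 0 2, key 1 2] <;>
      field_simp <;> ring

lemma contr_key (c : ℝ) (hc : c ≠ 0) (x y : Fin 4 → ℝ) :
    (contrEquiv c hc).symm ⁅contrEquiv c hc x, contrEquiv c hc y⁆ =
    ![x 1 * y 2 - x 2 * y 1,
      (x 2 * y 3 - x 3 * y 2) + c ^ 2 * (x 2 * y 0 - x 0 * y 2),
      (x 3 * y 1 - x 1 * y 3) + c ^ 2 * (x 0 * y 1 - x 1 * y 0), 0] := by
  have hlie : ∀ (a b : ℝ), ⁅a, b⁆ = 0 := fun a b => by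
    rw [Ring.lie_def]; ring
  funext i
  show (contrEquiv c hc).invFun _ i = _
  fin_cases i <;>
    simp [contrEquiv, cmat, hlie, LieSubalgebra.coe_bracket, Ring.lie_def,
      Matrix.mul_apply, Fin.sum_univ_three] <;>
    field_simp <;> ring

end Contr

open Filter in
/-- The Lie algebra `A_{4,10}`, given on `ℝ⁴` (standard basis `e₁, …, e₄`) by
`μ(e₂,e₃) = e₁`, `μ(e₂,e₄) = −e₃`, `μ(e₃,e₄) = e₂` and all other basis brackets zero, is a
contraction of the reductive Lie algebra `so(3) ⊕ ℝ`. -/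
theorem A410_is_contraction_of_so3_sum_R
    (e : Fin 4 → (Fin 4 → ℝ)) (he : ∀ i, e i = Pi.single i 1)
    (μ : (Fin 4 → ℝ) →ₗ[ℝ] (Fin 4 → ℝ) →ₗ[ℝ] (Fin 4 → ℝ))
    (hskew : ∀ x y, μ x y = - μ y x)
    (h23 : μ (e 1) (e 2) = e 0)
    (h24 : μ (e 1) (e 3) = - e 2)
    (h34 : μ (e 2) (e 3) = e 1)
    (h12 : μ (e 0) (e 1) = 0)
    (h13 : μ (e 0) (e 2) = 0)
    (h14 : μ (e 0) (e 3) = 0) :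
    ∃ φ : ℝ → ((Fin 4 → ℝ) ≃ₗ[ℝ] (so3 × ℝ)),
      ∀ x y : Fin 4 → ℝ,
        Tendsto (fun t => (φ t).symm ⁅φ t x, φ t y⁆) atTop (nhds (μ x y)) := by
  have hexp : ∀ t : ℝ, Real.exp (-t) ≠ 0 := fun t => (Real.exp_pos _).ne'
  refine ⟨fun t => contrEquiv (Real.exp (-t)) (hexp t), fun x y => ?_⟩
  -- compute μ x y explicitly
  have hdiag : ∀ a, μ a a = 0 := by
    intro a
    have h := hskew a a
    have h2 : (2 : ℝ) • μ a a = 0 := by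
      rw [two_smul]; nth_rewrite 2 [h]; simp
    simpa using (smul_eq_zero.mp h2).resolve_left (by norm_num)
  have h32 : μ (e 2) (e 1) = -e 0 := by rw [hskew, h23]
  have h42 : μ (e 3) (e 1) = e 2 := by rw [hskew, h24]; simp
  have h43 : μ (e 3) (e 2) = -e 1 := by rw [hskew, h34]
  have h21 : μ (e 1) (e 0) = 0 := by rw [hskew, h12]; simp
  have h31 : μ (e 2) (e 0) = 0 := by rw [hskew, h13]; simp
  have h41 : μ (e 3) (e 0) = 0 := by rw [hskew, h14]; simp
  have hxexp : ∀ v : Fin 4 → ℝ, v = v 0 • e 0 + v 1 • e 1 + v 2 • e 2 + v 3 • e 3 := by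
    intro v
    funext k
    fin_cases k <;> simp [he, Pi.single_apply]
  have hmu : μ x y = ![x 1 * y 2 - x 2 * y 1, x 2 * y 3 - x 3 * y 2,
      x 3 * y 1 - x 1 * y 3, 0] := by
    rw [hxexp x, hxexp y]
    simp only [map_add, map_smul, LinearMap.add_apply, LinearMap.smul_apply,
      h23, h24, h34, h12, h13, h14, h32, h42, h43, h21, h31, h41, hdiag]
    funext k
    fin_cases k <;> simp [he, Pi.single_apply] <;> ring
  rw [hmu]
  simp only [contr_key]
  rw [tendsto_pi_nhds]
  intro k
  have hc2 : Filter.Tendsto (fun t : ℝ => Real.exp (-t) ^ 2) Filter.atTop (nhds 0) := by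
    have h0 : Filter.Tendsto (fun t : ℝ => Real.exp (-t)) Filter.atTop (nhds 0) := by
      exact Real.tendsto_exp_atBot.comp tendsto_neg_atTop_atBot
    simpa using h0.pow 2
  fin_cases k <;> simp only [Matrix.cons_val_zero, Matrix.cons_val_one, Matrix.head_cons,
    Matrix.cons_val_two, Matrix.tail_cons, Matrix.cons_val_three, Fin.isValue]
  · exact tendsto_const_nhds
  · have := tendsto_const_nhds (α := ℝ) (x := x 2 * y 3 - x 3 * y 2)
      |>.add (hc2.mul_const (x 2 * y 0 - x 0 * y 2))
    simpa using this
  · have := tendsto_const_nhds (α := ℝ) (x := x 3 * y 1 - x 1 * y 3)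
      |>.add (hc2.mul_const (x 0 * y 1 - x 1 * y 0))
    simpa using this
  · exact tendsto_const_nhds
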